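/- Let g : ℝ → ℝ be a monotone increasing function and S ≤ T Hermitian operators on a finite-dimensional complex Hilbert space. Then for each i, g(λ_i(S)) ≤ g(λ_i(T)), where λ_i denotes the i-th largest eigenvalue; consequently tr(g(S)) ≤ tr(g(T)). -/

import Mathlib

open Matrix Filter
open scoped ComplexOrder InnerProductSpace

/-- Functional calculus for Hermitian matrices: apply `f` to the eigenvalues. -/
noncomputable def mfun {d : ℕ} (f : ℝ → ℝ) (A : Matrix (Fin d) (Fin d) ℂ) :
    Matrix (Fin d) (Fin d) ℂ :=
  if hA : A.IsHermitian then
    (hA.eigenvectorUnitary : Matrix (Fin d) (Fin d) ℂ) *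
      Matrix.diagonal (fun i => (f (hA.eigenvalues i) : ℂ)) *
      star (hA.eigenvectorUnitary : Matrix (Fin d) (Fin d) ℂ)
  else 0

noncomputable def mexp {d : ℕ} (A : Matrix (Fin d) (Fin d) ℂ) : Matrix (Fin d) (Fin d) ℂ :=
  mfun Real.exp A

noncomputable def mlog {d : ℕ} (A : Matrix (Fin d) (Fin d) ℂ) : Matrix (Fin d) (Fin d) ℂ :=
  mfun Real.log A

/-- The Löwner order: `A ≤ B` iff `B - A` is positive semidefinite. -/
def loewnerLE {d : ℕ} (A B : Matrix (Fin d) (Fin d) ℂ) : Prop :=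
  (B - A).PosSemidef

/-- The quadratic form ⟨Ax, x⟩. -/
noncomputable def qf {d : ℕ} (A : Matrix (Fin d) (Fin d) ℂ) (x : Fin d → ℂ) : ℂ :=
  star x ⬝ᵥ A.mulVec x

/-- The rank-one projection x ⊗ x. -/
noncomputable def rankOneProj {d : ℕ} (x : Fin d → ℂ) : Matrix (Fin d) (Fin d) ℂ :=
  Matrix.vecMulVec x (star x)

/-- The eigenvalues of a Hermitian matrix listed in decreasing order (with
multiplicity): `eigDecr hA i` is the `i`-th largest eigenvalue. -/
noncomputable def eigDecr {d : ℕ} {A : Matrix (Fin d) (Fin d) ℂ}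
    (hA : A.IsHermitian) : Fin d → ℝ :=
  fun i => (hA.eigenvalues ∘ Tuple.sort hA.eigenvalues) i.rev


variable {d : ℕ} {A : Matrix (Fin d) (Fin d) ℂ}

lemma qf_eq (hA : A.IsHermitian) (x : EuclideanSpace ℂ (Fin d)) :
    ⟪x, Matrix.toEuclideanLin A x⟫_ℂ =
      ∑ k, (hA.eigenvalues k : ℂ) * ‖hA.eigenvectorBasis.repr x k‖^2 := by
  set b := hA.eigenvectorBasis with hb
  have hx : x = ∑ k, b.repr x k • b k := by
    simpa [b.repr_apply_apply] using (b.sum_repr' x).symm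
  have heig : ∀ k, Matrix.toEuclideanLin A (b k) = (hA.eigenvalues k : ℂ) • b k := by
    intro k
    apply (WithLp.equiv 2 _).injective
    simp only [WithLp.equiv_apply, Matrix.ofLp_toEuclideanLin_apply]
    have := hA.mulVec_eigenvectorBasis k
    simpa using this
  have hAx : Matrix.toEuclideanLin A x
      = ∑ k, b.repr x k • ((hA.eigenvalues k : ℂ) • (b k : EuclideanSpace ℂ (Fin d))) := by
    conv_lhs => rw [hx, map_sum]
    simp only [_root_.map_smul, heig]
  rw [hAx, inner_sum]
  congr 1; ext k
  rw [inner_smul_right, inner_smul_right]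
  have h1 : ⟪x, b k⟫_ℂ = starRingEnd ℂ (b.repr x k) := by
    rw [← inner_conj_symm, b.repr_apply_apply]
  rw [h1, mul_comm (b.repr x k), mul_assoc, mul_comm ((starRingEnd ℂ) _), Complex.mul_conj']

lemma repr_zero_of_mem_span (hA : A.IsHermitian) {s : Set (Fin d)}
    {x : EuclideanSpace ℂ (Fin d)}
    (hx : x ∈ Submodule.span ℂ (⇑hA.eigenvectorBasis '' s)) {k : Fin d} (hk : k ∉ s) :
    hA.eigenvectorBasis.repr x k = 0 := by
  set b := hA.eigenvectorBasis
  have h1 : x ∈ Submodule.span ℂ (⇑b.toBasis '' s) := by rwa [b.coe_toBasis]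
  have h2 := (Module.Basis.mem_span_image b.toBasis).mp h1
  have h3 : b.toBasis.repr x k = 0 := by
    by_contra h
    exact hk (h2 (Finsupp.mem_support_iff.mpr h))
  rwa [b.coe_toBasis_repr_apply] at h3

lemma normsq_eq (hA : A.IsHermitian) (x : EuclideanSpace ℂ (Fin d)) :
    ‖x‖^2 = ∑ k, ‖hA.eigenvectorBasis.repr x k‖^2 := by
  rw [← hA.eigenvectorBasis.repr.norm_map x, EuclideanSpace.norm_eq, Real.sq_sqrt]
  positivity

lemma qf_ge (hA : A.IsHermitian) {s : Set (Fin d)} {m : ℝ}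
    (hm : ∀ k ∈ s, m ≤ hA.eigenvalues k) {x : EuclideanSpace ℂ (Fin d)}
    (hx : x ∈ Submodule.span ℂ (⇑hA.eigenvectorBasis '' s)) :
    m * ‖x‖^2 ≤ (⟪x, Matrix.toEuclideanLin A x⟫_ℂ).re := by
  rw [qf_eq hA x, Complex.re_sum, normsq_eq hA x, Finset.mul_sum]
  apply Finset.sum_le_sum
  intro k _
  have : ((hA.eigenvalues k : ℂ) * (‖hA.eigenvectorBasis.repr x k‖ : ℂ)^2).re
      = hA.eigenvalues k * ‖hA.eigenvectorBasis.repr x k‖^2 := by norm_cast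
  rw [this]
  by_cases hk : k ∈ s
  · exact mul_le_mul_of_nonneg_right (hm k hk) (by positivity)
  · rw [repr_zero_of_mem_span hA hx hk]; simp

lemma qf_le (hA : A.IsHermitian) {s : Set (Fin d)} {m : ℝ}
    (hm : ∀ k ∈ s, hA.eigenvalues k ≤ m) {x : EuclideanSpace ℂ (Fin d)}
    (hx : x ∈ Submodule.span ℂ (⇑hA.eigenvectorBasis '' s)) :
    (⟪x, Matrix.toEuclideanLin A x⟫_ℂ).re ≤ m * ‖x‖^2 := by
  rw [qf_eq hA x, Complex.re_sum, normsq_eq hA x, Finset.mul_sum]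
  apply Finset.sum_le_sum
  intro k _
  have : ((hA.eigenvalues k : ℂ) * (‖hA.eigenvectorBasis.repr x k‖ : ℂ)^2).re
      = hA.eigenvalues k * ‖hA.eigenvectorBasis.repr x k‖^2 := by norm_cast
  rw [this]
  by_cases hk : k ∈ s
  · exact mul_le_mul_of_nonneg_right (hm k hk) (by positivity)
  · rw [repr_zero_of_mem_span hA hx hk]; simp

lemma eigDecr_mono {d : ℕ} {S T : Matrix (Fin d) (Fin d) ℂ}
    (hS : S.IsHermitian) (hT : T.IsHermitian) (hST : (T - S).PosSemidef) (i : Fin d) :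
    eigDecr hS i ≤ eigDecr hT i := by
  classical
  set σ := Tuple.sort hS.eigenvalues
  set τ := Tuple.sort hT.eigenvalues
  set bS := hS.eigenvectorBasis
  set bT := hT.eigenvectorBasis
  set sU : Set (Fin d) := ↑(Finset.image σ (Finset.Ici i.rev)) with hsU
  set sW : Set (Fin d) := ↑(Finset.image τ (Finset.Iic i.rev)) with hsW
  set U : Submodule ℂ (EuclideanSpace ℂ (Fin d)) := Submodule.span ℂ (⇑bS '' sU)
  set W : Submodule ℂ (EuclideanSpace ℂ (Fin d)) := Submodule.span ℂ (⇑bT '' sW)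
  -- dimension counts
  have hdim : ∀ (b : OrthonormalBasis (Fin d) ℂ (EuclideanSpace ℂ (Fin d)))
      (s : Finset (Fin d)),
      Module.finrank ℂ (Submodule.span ℂ (⇑b '' ↑s)) = s.card := by
    intro b s
    have hli : LinearIndependent ℂ (fun x : ↥(⇑b '' (↑s : Set (Fin d))) => (x : EuclideanSpace ℂ (Fin d))) := by
      apply LinearIndepOn.id_image (v := ⇑b)
      exact (b.orthonormal.linearIndependent).comp _ Subtype.val_injective
    rw [finrank_span_set_eq_card hli]
    rw [Set.toFinset_image]
    have hbinj : Function.Injective ⇑b := by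
      rw [← b.coe_toBasis]; exact b.toBasis.injective
    rw [Finset.card_image_of_injective _ hbinj]
    simp
  have hUdim : Module.finrank ℂ U = i + 1 := by
    rw [hdim bS]
    rw [Finset.card_image_of_injective _ σ.injective, Fin.card_Ici, Fin.val_rev]
    omega
  have hWdim : Module.finrank ℂ W = d - i := by
    rw [hdim bT]
    rw [Finset.card_image_of_injective _ τ.injective, Fin.card_Iic, Fin.val_rev]
    omega
  -- nonzero intersection
  have hbot : U ⊓ W ≠ ⊥ := by
    intro hb
    have hsum := Submodule.finrank_sup_add_finrank_inf_eq U W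
    rw [hb, finrank_bot, hUdim, hWdim] at hsum
    have hle : Module.finrank ℂ ↥(U ⊔ W) ≤ d := by
      have := Submodule.finrank_le (U ⊔ W)
      rwa [finrank_euclideanSpace_fin] at this
    have hi := i.isLt
    omega
  obtain ⟨x, hxUW, hx0⟩ := Submodule.exists_mem_ne_zero_of_ne_bot hbot
  have hxU : x ∈ U := hxUW.1
  have hxW : x ∈ W := hxUW.2
  -- Rayleigh bounds
  have hge : eigDecr hS i * ‖x‖^2 ≤ (⟪x, Matrix.toEuclideanLin S x⟫_ℂ).re := by
    apply qf_ge hS _ hxU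
    intro k hk
    rw [hsU] at hk
    obtain ⟨j, hj, rfl⟩ := Finset.mem_coe.mp hk |> Finset.mem_image.mp
    exact Tuple.monotone_sort hS.eigenvalues (Finset.mem_Ici.mp hj)
  have hle2 : (⟪x, Matrix.toEuclideanLin T x⟫_ℂ).re ≤ eigDecr hT i * ‖x‖^2 := by
    apply qf_le hT _ hxW
    intro k hk
    rw [hsW] at hk
    obtain ⟨j, hj, rfl⟩ := Finset.mem_coe.mp hk |> Finset.mem_image.mp
    exact Tuple.monotone_sort hT.eigenvalues (Finset.mem_Iic.mp hj)
  -- monotonicity via PosSemidef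
  have hmid : (⟪x, Matrix.toEuclideanLin S x⟫_ℂ).re ≤ (⟪x, Matrix.toEuclideanLin T x⟫_ℂ).re := by
    have h0 := (Matrix.posSemidef_iff_dotProduct_mulVec.mp hST).2 ((WithLp.equiv 2 (Fin d → ℂ)) x)
    have heq : ⟪x, Matrix.toEuclideanLin T x⟫_ℂ - ⟪x, Matrix.toEuclideanLin S x⟫_ℂ
        = star ((WithLp.equiv 2 (Fin d → ℂ)) x) ⬝ᵥ ((T - S) *ᵥ (WithLp.equiv 2 (Fin d → ℂ)) x) := by
      rw [EuclideanSpace.inner_eq_star_dotProduct, EuclideanSpace.inner_eq_star_dotProduct]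
      rw [Matrix.ofLp_toEuclideanLin_apply, Matrix.ofLp_toEuclideanLin_apply, dotProduct_comm, dotProduct_comm (S *ᵥ _)]
      rw [Matrix.sub_mulVec, dotProduct_sub]
      rfl
    have : 0 ≤ (⟪x, Matrix.toEuclideanLin T x⟫_ℂ - ⟪x, Matrix.toEuclideanLin S x⟫_ℂ).re := by
      rw [heq]
      exact (Complex.le_def.mp h0).1
    rw [Complex.sub_re] at this
    linarith
  have hnorm : (0:ℝ) < ‖x‖^2 := by
    have := norm_pos_iff.mpr hx0
    positivity
  nlinarith [hge, hle2, hmid]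

lemma trace_mfun {d : ℕ} (g : ℝ → ℝ) {A : Matrix (Fin d) (Fin d) ℂ} (hA : A.IsHermitian) :
    (mfun g A).trace.re = ∑ i, g (eigDecr hA i) := by
  have h1 : (mfun g A).trace = ∑ k, (g (hA.eigenvalues k) : ℂ) := by
    rw [mfun, dif_pos hA, Matrix.trace_mul_cycle]
    rw [show (star (hA.eigenvectorUnitary : Matrix (Fin d) (Fin d) ℂ)) *
        (hA.eigenvectorUnitary : Matrix (Fin d) (Fin d) ℂ) = 1 from
      Matrix.UnitaryGroup.star_mul_self _]
    rw [one_mul, Matrix.trace_diagonal]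
  rw [h1, Complex.re_sum]
  simp only [Complex.ofReal_re]
  have h2 : ∑ i, g (eigDecr hA i) = ∑ i, g (hA.eigenvalues (Tuple.sort hA.eigenvalues i)) := by
    exact Fintype.sum_equiv (Fin.revPerm) _ _ (fun i => rfl)
  rw [h2, ← Equiv.sum_comp (Tuple.sort hA.eigenvalues) (fun k => g (hA.eigenvalues k))]

/-- for monotone `g` and Hermitian `S ≤ T`, `g` of the `i`-th largest
eigenvalue of `S` is at most that of `T`, and `tr g(S) ≤ tr g(T)`. -/
theorem weyl_monotone_trace {d : ℕ} (g : ℝ → ℝ) (hg : Monotone g)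
    (S T : Matrix (Fin d) (Fin d) ℂ) (hS : S.IsHermitian) (hT : T.IsHermitian)
    (hST : loewnerLE S T) :
    (∀ i : Fin d, g (eigDecr hS i) ≤ g (eigDecr hT i)) ∧
      (mfun g S).trace.re ≤ (mfun g T).trace.re := by
  constructor
  · intro i
    exact hg (eigDecr_mono hS hT hST i)
  · rw [trace_mfun g hS, trace_mfun g hT]
    exact Finset.sum_le_sum fun i _ => hg (eigDecr_mono hS hT hST i)
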